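/- With the notation of the previous construction (γ ∈ (1,2), θₙ = n log n, rₙ = e^{-θₙ}, π = Σ aₙ δ_{rₙ} with aₙ = rₙ^{-γ}), setting Rₙ = Σ_{m≥n} r_m^{2-γ} and Sₙ = Σ_{3≤m≤n} r_m^{-(γ-1)}, one has Rₙ ~ rₙ^{2-γ} and Sₙ ~ rₙ^{-(γ-1)} as n → ∞; consequently the upper exponent of ψ' at infinity satisfies η_{ψ'} ≤ γ - 1, so in fact γ_{ψ'} = η_{ψ'} = γ - 1. -/

import Mathlib

open MeasureTheory Real Set Filter

noncomputable def uu (n : ℕ) : ℝ := n * Real.log n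

lemma uu_nonneg (n : ℕ) : 0 ≤ uu n := by
  rcases Nat.eq_zero_or_pos n with h | h
  · simp [uu, h]
  · exact mul_nonneg (by positivity) (Real.log_natCast_nonneg n)

lemma log_ge_one {n : ℕ} (h : 3 ≤ n) : 1 ≤ Real.log n := by
  have h3 : (Real.exp 1) ≤ (n : ℝ) := by
    have := Real.exp_one_lt_d9
    have : Real.exp 1 < 3 := by linarith [Real.exp_one_lt_d9]
    have hn : (3:ℝ) ≤ n := by exact_mod_cast h
    linarith
  calc (1:ℝ) = Real.log (Real.exp 1) := by rw [Real.log_exp]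
    _ ≤ Real.log n := Real.log_le_log (Real.exp_pos 1) h3

lemma uu_succ_ge (m : ℕ) : uu m + Real.log (m+1) ≤ uu (m+1) := by
  have h1 : Real.log m ≤ Real.log (m+1) := by
    rcases Nat.eq_zero_or_pos m with h | h
    · simp [h, Real.log_nonneg]
    · exact Real.log_le_log (by exact_mod_cast h) (by push_cast; linarith)
  have : (m:ℝ) * Real.log m ≤ (m:ℝ) * Real.log (m+1) :=
    mul_le_mul_of_nonneg_left h1 (by positivity)
  simp only [uu]
  push_cast
  nlinarith

lemma uu_mono : Monotone uu := by
  apply monotone_nat_of_le_succ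
  intro n
  have := uu_succ_ge n
  have h2 : (0:ℝ) ≤ Real.log (n+1) := Real.log_nonneg (by push_cast; linarith [Nat.cast_nonneg (α := ℝ) n])
  linarith

lemma uu_add_ge {n : ℕ} (hn : 3 ≤ n) (k : ℕ) : uu n + k * Real.log n ≤ uu (n + k) := by
  induction k with
  | zero => simp
  | succ k ih =>
    have h1 := uu_succ_ge (n + k)
    have h2 : Real.log n ≤ Real.log (n + k + 1) := by
      apply Real.log_le_log (by exact_mod_cast lt_of_lt_of_le (by norm_num) hn)
      push_cast; linarith [Nat.cast_nonneg (α := ℝ) k]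
    have h6 : n + (k+1) = (n + k) + 1 := by ring
    rw [h6]
    push_cast at h1 h2 ih ⊢
    nlinarith

lemma uu_add_ge_one {n : ℕ} (hn : 3 ≤ n) (k : ℕ) : uu n + k ≤ uu (n + k) := by
  have h := uu_add_ge hn k
  have h2 : (k:ℝ) * 1 ≤ (k:ℝ) * Real.log n := by
    apply mul_le_mul_of_nonneg_left (log_ge_one hn) (Nat.cast_nonneg k)
  linarith [h2]

lemma uu_ge_self {n : ℕ} (hn : 3 ≤ n) : (n : ℝ) ≤ uu n := by
  have := log_ge_one hn
  have : (n:ℝ) * 1 ≤ (n:ℝ) * Real.log n := mul_le_mul_of_nonneg_left this (Nat.cast_nonneg n)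
  simpa [uu] using this

lemma uu_gap {m n : ℕ} (hm : 3 ≤ m) (hmn : m < n) :
    uu m + (n - 1 - m : ℕ) + Real.log n ≤ uu n := by
  have h1 : n = (n - 1) + 1 := by omega
  have h2 : n - 1 = m + (n - 1 - m) := by omega
  have h3 := uu_add_ge_one hm (n - 1 - m)
  rw [← h2] at h3
  have h4 := uu_succ_ge (n - 1)
  have h5 : ((n-1:ℕ):ℝ) + 1 = (n:ℝ) := by
    have : ((n-1:ℕ):ℝ) = (n:ℝ) - 1 := by
      have : (1:ℕ) ≤ n := by omega
      push_cast [Nat.cast_sub this]; ring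
    rw [this]; ring
  have h6 : n - 1 + 1 = n := by omega
  rw [h5, h6] at h4
  linarith [h3, h4]

lemma uu_succ_le {n : ℕ} (hn : 1 ≤ n) : uu (n+1) ≤ uu n + Real.log n + 2 := by
  have hnp : (0:ℝ) < n := by exact_mod_cast hn
  have hlog : Real.log (↑n + 1) ≤ Real.log n + 1/n := by
    have hq : (0:ℝ) < (↑n + 1)/↑n := by positivity
    have := Real.log_le_sub_one_of_pos hq
    rw [Real.log_div (by positivity) (ne_of_gt hnp)] at this
    have hd : ((n:ℝ) + 1)/n = 1 + 1/n := by field_simp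
    rw [hd] at this
    linarith
  have hln : 0 ≤ Real.log n := Real.log_natCast_nonneg n
  have h1n : 1/(n:ℝ) ≤ 1 := by rw [div_le_one hnp]; exact_mod_cast hn
  simp only [uu]
  push_cast
  have expand : ((n:ℝ)+1) * Real.log (↑n+1) ≤ ((n:ℝ)+1) * (Real.log n + 1/n) :=
    mul_le_mul_of_nonneg_left hlog (by positivity)
  have : ((n:ℝ)+1) * (Real.log n + 1/n) = n * Real.log n + Real.log n + (n+1)/n := by
    field_simp
  rw [this] at expand
  have : ((n:ℝ)+1)/n = 1 + 1/n := by field_simp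
  rw [this] at expand
  linarith

lemma geom_icc_le {q : ℝ} (hq0 : 0 ≤ q) (hq1 : q < 1) (a N : ℕ) :
    ∑ m ∈ Finset.Icc a N, q ^ (N - m) ≤ (1 - q)⁻¹ := by
  have hsub : Finset.Icc a N ⊆ Finset.range (N+1) := by
    intro x hx
    simp only [Finset.mem_Icc] at hx
    simp only [Finset.mem_range]
    omega
  have h1 : ∑ m ∈ Finset.Icc a N, q ^ (N - m) ≤ ∑ m ∈ Finset.range (N+1), q ^ (N - m) :=
    Finset.sum_le_sum_of_subset_of_nonneg hsub (fun i _ _ => pow_nonneg hq0 _)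
  have h2 : ∑ m ∈ Finset.range (N+1), q ^ (N - m) = ∑ j ∈ Finset.range (N+1), q ^ j := by
    rw [← Finset.sum_range_reflect]
    apply Finset.sum_congr rfl
    intro i hi
    simp only [Finset.mem_range] at hi
    congr 1
    omega
  have h3 : ∑ j ∈ Finset.range (N+1), q ^ j ≤ ∑' j : ℕ, q ^ j :=
    (summable_geometric_of_lt_one hq0 hq1).sum_le_tsum _ (fun i _ => pow_nonneg hq0 _)
  rw [tsum_geometric_of_lt_one hq0 hq1] at h3
  linarith

noncomputable def rr (n : ℕ) : ℝ := Real.exp (-uu n)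

lemma rr_rpow (n : ℕ) (y : ℝ) : rr n ^ y = Real.exp (-(y * uu n)) := by
  rw [rr, ← Real.exp_mul]; ring_nf

lemma part1 (γ : ℝ) (hγ1 : 1 < γ) (hγ2 : γ < 2) :
    Filter.Tendsto (fun n : ℕ => (∑' m : ℕ, rr (n + m) ^ (2-γ)) / rr n ^ (2-γ))
      atTop (nhds 1) := by
  set a := 2 - γ with ha_def
  have ha : 0 < a := by simp [ha_def]; linarith
  -- geometric comparison, valid for n ≥ 3
  have key : ∀ n : ℕ, 3 ≤ n → ∀ m : ℕ,
      rr (n + m) ^ a ≤ rr n ^ a * Real.exp (-(a * Real.log n)) ^ m := by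
    intro n hn m
    rw [rr_rpow, rr_rpow, ← Real.exp_nat_mul, ← Real.exp_add]
    apply Real.exp_le_exp.2
    have := uu_add_ge hn m
    nlinarith [this]
  have hq : ∀ n : ℕ, 3 ≤ n → Real.exp (-(a * Real.log n)) < 1 := by
    intro n hn
    rw [Real.exp_lt_one_iff]
    have := log_ge_one hn
    nlinarith
  have hsum : ∀ n : ℕ, 3 ≤ n → Summable (fun m => rr (n + m) ^ a) := by
    intro n hn
    apply Summable.of_nonneg_of_le (fun m => by rw [rr_rpow]; positivity) (key n hn)
    exact (summable_geometric_of_lt_one (Real.exp_nonneg _) (hq n hn)).mul_left _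
  have hlow : ∀ n : ℕ, 3 ≤ n → (1:ℝ) ≤ (∑' m : ℕ, rr (n + m) ^ a) / rr n ^ a := by
    intro n hn
    rw [le_div_iff₀ (by rw [rr_rpow]; positivity), one_mul]
    have := (hsum n hn).le_tsum 0 (fun m _ => by rw [rr_rpow]; positivity)
    simpa using this
  have hhigh : ∀ n : ℕ, 3 ≤ n →
      (∑' m : ℕ, rr (n + m) ^ a) / rr n ^ a ≤ (1 - Real.exp (-(a * Real.log n)))⁻¹ := by
    intro n hn
    rw [div_le_iff₀ (by rw [rr_rpow]; positivity)]
    calc (∑' m : ℕ, rr (n + m) ^ a)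
        ≤ ∑' m : ℕ, rr n ^ a * Real.exp (-(a * Real.log n)) ^ m :=
          (hsum n hn).tsum_le_tsum (key n hn)
            ((summable_geometric_of_lt_one (Real.exp_nonneg _) (hq n hn)).mul_left _)
      _ = rr n ^ a * (1 - Real.exp (-(a * Real.log n)))⁻¹ := by
          rw [tsum_mul_left, tsum_geometric_of_lt_one (Real.exp_nonneg _) (hq n hn)]
      _ = (1 - Real.exp (-(a * Real.log n)))⁻¹ * rr n ^ a := by ring
  have htop : Filter.Tendsto (fun n : ℕ => (1 - Real.exp (-(a * Real.log n)))⁻¹)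
      atTop (nhds 1) := by
    have h1 : Filter.Tendsto (fun n : ℕ => a * Real.log n) atTop atTop :=
      (Real.tendsto_log_atTop.comp tendsto_natCast_atTop_atTop).const_mul_atTop ha
    have h2 : Filter.Tendsto (fun n : ℕ => Real.exp (-(a * Real.log n))) atTop (nhds 0) :=
      Real.tendsto_exp_atBot.comp (tendsto_neg_atBot_iff.mpr h1)
    have h3 := (tendsto_const_nhds (x := (1:ℝ)) (f := atTop (α := ℕ))).sub h2
    rw [sub_zero] at h3
    simpa using h3.inv₀ (by norm_num)
  refine tendsto_of_tendsto_of_tendsto_of_le_of_le' tendsto_const_nhds htop ?_ ?_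
  · filter_upwards [eventually_ge_atTop 3] with n hn using hlow n hn
  · filter_upwards [eventually_ge_atTop 3] with n hn using hhigh n hn

lemma part2 (γ : ℝ) (hγ1 : 1 < γ) (hγ2 : γ < 2) :
    Filter.Tendsto (fun n : ℕ => (∑ m ∈ Finset.Icc 3 n, rr m ^ (-(γ-1))) / rr n ^ (-(γ-1)))
      atTop (nhds 1) := by
  set b := γ - 1 with hb_def
  have hb : 0 < b := by simp [hb_def]; linarith
  set q := Real.exp (-b) with hq_def
  have hq0 : 0 ≤ q := Real.exp_nonneg _
  have hq1 : q < 1 := by rw [hq_def, Real.exp_lt_one_iff]; linarith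
  have hlow : ∀ n : ℕ, 3 ≤ n →
      (1:ℝ) ≤ (∑ m ∈ Finset.Icc 3 n, rr m ^ (-b)) / rr n ^ (-b) := by
    intro n hn
    rw [le_div_iff₀ (by rw [rr_rpow]; positivity), one_mul]
    exact Finset.single_le_sum (f := fun m => rr m ^ (-b))
      (fun m _ => by rw [rr_rpow]; positivity) (Finset.mem_Icc.2 ⟨hn, le_rfl⟩)
  have hhigh : ∀ n : ℕ, 3 ≤ n →
      (∑ m ∈ Finset.Icc 3 n, rr m ^ (-b)) / rr n ^ (-b)
        ≤ 1 + Real.exp (-(b * Real.log n)) * (1 - q)⁻¹ := by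
    intro n hn
    rw [div_le_iff₀ (by rw [rr_rpow]; positivity)]
    have hsplit : Finset.Icc 3 n = insert n (Finset.Icc 3 (n-1)) := by
      ext x; simp only [Finset.mem_Icc, Finset.mem_insert]; omega
    have hnotmem : n ∉ Finset.Icc 3 (n-1) := by simp only [Finset.mem_Icc]; omega
    rw [hsplit, Finset.sum_insert hnotmem]
    have hterm : ∀ m ∈ Finset.Icc 3 (n-1),
        rr m ^ (-b) ≤ (Real.exp (-(b * Real.log n)) * rr n ^ (-b)) * q ^ ((n-1) - m) := by
      intro m hm
      simp only [Finset.mem_Icc] at hm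
      have hgap := uu_gap hm.1 (show m < n by omega)
      rw [rr_rpow, rr_rpow, hq_def, ← Real.exp_nat_mul, ← Real.exp_add, ← Real.exp_add]
      apply Real.exp_le_exp.2
      have hk : (0:ℝ) ≤ ((n-1-m : ℕ):ℝ) := Nat.cast_nonneg _
      nlinarith [hgap]
    have hsum2 : ∑ m ∈ Finset.Icc 3 (n-1), rr m ^ (-b)
        ≤ (Real.exp (-(b * Real.log n)) * rr n ^ (-b)) * (1-q)⁻¹ := by
      calc ∑ m ∈ Finset.Icc 3 (n-1), rr m ^ (-b)
          ≤ ∑ m ∈ Finset.Icc 3 (n-1),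
              (Real.exp (-(b * Real.log n)) * rr n ^ (-b)) * q ^ ((n-1) - m) :=
            Finset.sum_le_sum hterm
        _ = (Real.exp (-(b * Real.log n)) * rr n ^ (-b))
              * ∑ m ∈ Finset.Icc 3 (n-1), q ^ ((n-1) - m) := by rw [Finset.mul_sum]
        _ ≤ (Real.exp (-(b * Real.log n)) * rr n ^ (-b)) * (1-q)⁻¹ := by
            apply mul_le_mul_of_nonneg_left (geom_icc_le hq0 hq1 3 (n-1))
            have : (0:ℝ) ≤ rr n ^ (-b) := by rw [rr_rpow]; positivity
            positivity
    have hrr : (0:ℝ) ≤ rr n ^ (-b) := by rw [rr_rpow]; positivity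
    nlinarith [hsum2]
  have htop : Filter.Tendsto (fun n : ℕ => 1 + Real.exp (-(b * Real.log n)) * (1 - q)⁻¹)
      atTop (nhds 1) := by
    have h1 : Filter.Tendsto (fun n : ℕ => b * Real.log n) atTop atTop :=
      (Real.tendsto_log_atTop.comp tendsto_natCast_atTop_atTop).const_mul_atTop hb
    have h2 : Filter.Tendsto (fun n : ℕ => Real.exp (-(b * Real.log n))) atTop (nhds 0) :=
      Real.tendsto_exp_atBot.comp (tendsto_neg_atBot_iff.mpr h1)
    have h3 := (tendsto_const_nhds (x := (1:ℝ)) (f := atTop (α := ℕ))).add (h2.mul_const (1-q)⁻¹)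
    simpa using h3
  refine tendsto_of_tendsto_of_tendsto_of_le_of_le' tendsto_const_nhds htop ?_ ?_
  · filter_upwards [eventually_ge_atTop 3] with n hn using hlow n hn
  · filter_upwards [eventually_ge_atTop 3] with n hn using hhigh n hn

lemma exists_n {x : ℝ} (hx : uu 3 ≤ x) : ∃ n : ℕ, 3 ≤ n ∧ uu n ≤ x ∧ x < uu (n+1) := by
  have hex : ∃ k : ℕ, x < uu (3 + k) := by
    obtain ⟨N, hN⟩ := exists_nat_gt x
    refine ⟨N, lt_of_lt_of_le hN ?_⟩
    calc (N:ℝ) ≤ ((3 + N : ℕ):ℝ) := by push_cast; linarith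
      _ ≤ uu (3 + N) := uu_ge_self (by omega)
  classical
  set k0 := Nat.find hex with hk0_def
  have hspec : x < uu (3 + k0) := Nat.find_spec hex
  have hk0pos : 0 < k0 := by
    rcases Nat.eq_zero_or_pos k0 with h | h
    · exfalso; rw [h] at hspec; simp at hspec; linarith
    · exact h
  refine ⟨3 + (k0 - 1), by omega, ?_, ?_⟩
  · have := Nat.find_min hex (m := k0 - 1) (by omega)
    push_neg at this
    exact this
  · have : 3 + (k0 - 1) + 1 = 3 + k0 := by omega
    rw [this]
    exact hspec

lemma one_sub_exp_neg_le {x : ℝ} (hx : 0 ≤ x) : 1 - Real.exp (-x) ≤ x := by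
  nlinarith [Real.add_one_le_exp (-x)]

lemma one_sub_exp_neg_nonneg {x : ℝ} (hx : 0 ≤ x) : 0 ≤ 1 - Real.exp (-x) := by
  have h : Real.exp (-x) ≤ 1 := by
    rw [← Real.exp_zero]; exact Real.exp_le_exp.2 (by linarith)
  linarith

lemma psi_term_nonneg (b l : ℝ) (hl : 0 ≤ l) (k : ℕ) :
    0 ≤ rr (k+3) ^ (-b) * (1 - Real.exp (-(l * rr (k+3)))) := by
  apply mul_nonneg (by rw [rr_rpow]; positivity)
  exact one_sub_exp_neg_nonneg (by unfold rr; positivity)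

lemma psi_term_le_exp (b l : ℝ) (k : ℕ) :
    rr (k+3) ^ (-b) * (1 - Real.exp (-(l * rr (k+3)))) ≤ Real.exp (b * uu (k+3)) := by
  rw [rr_rpow]
  have h1 : 1 - Real.exp (-(l * rr (k+3))) ≤ 1 := by
    nlinarith [Real.exp_nonneg (-(l * rr (k+3)))]
  have h2 : (0:ℝ) ≤ Real.exp (-(-b * uu (k+3))) := Real.exp_nonneg _
  calc Real.exp (-(-b * uu (k+3))) * (1 - Real.exp (-(l * rr (k+3))))
      ≤ Real.exp (-(-b * uu (k+3))) * 1 := mul_le_mul_of_nonneg_left h1 h2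
    _ = Real.exp (b * uu (k+3)) := by rw [mul_one]; ring_nf

lemma psi_term_le_lin (b l : ℝ) (hl : 0 ≤ l) (k : ℕ) :
    rr (k+3) ^ (-b) * (1 - Real.exp (-(l * rr (k+3))))
      ≤ l * Real.exp (-((1-b) * uu (k+3))) := by
  have hrpos : 0 < rr (k+3) := by unfold rr; positivity
  have h1 : 1 - Real.exp (-(l * rr (k+3))) ≤ l * rr (k+3) :=
    one_sub_exp_neg_le (by positivity)
  have h2 : (0:ℝ) ≤ rr (k+3) ^ (-b) := by rw [rr_rpow]; positivity
  calc rr (k+3) ^ (-b) * (1 - Real.exp (-(l * rr (k+3))))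
      ≤ rr (k+3) ^ (-b) * (l * rr (k+3)) := mul_le_mul_of_nonneg_left h1 h2
    _ = l * Real.exp (-((1-b) * uu (k+3))) := by
        rw [rr_rpow, rr, mul_left_comm, ← Real.exp_add]
        ring_nf

lemma psi_summable (b l : ℝ) (hb : 0 < b) (hb1 : b < 1) (hl : 0 ≤ l) :
    Summable (fun k : ℕ => rr (k+3) ^ (-b) * (1 - Real.exp (-(l * rr (k+3))))) := by
  have hg : Summable (fun k : ℕ => (l * Real.exp (-((1-b) * uu 3))) * Real.exp (-(1-b)) ^ k) := by
    apply Summable.mul_left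
    apply summable_geometric_of_lt_one (Real.exp_nonneg _)
    rw [Real.exp_lt_one_iff]; linarith
  refine Summable.of_nonneg_of_le (psi_term_nonneg b l hl) (fun k => ?_) hg
  refine le_trans (psi_term_le_lin b l hl k) ?_
  rw [mul_assoc, ← Real.exp_nat_mul, ← Real.exp_add]
  apply mul_le_mul_of_nonneg_left _ hl
  apply Real.exp_le_exp.2
  have h3 : uu 3 + k ≤ uu (3 + k) := uu_add_ge_one le_rfl k
  have hco : (3:ℕ) + k = k + 3 := by omega
  rw [hco] at h3
  nlinarith [h3]

lemma psi_upper (γ : ℝ) (hγ1 : 1 < γ) (hγ2 : γ < 2) {l : ℝ} (hl : Real.exp (uu 3) ≤ l) :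
    ∑' k : ℕ, rr (k+3) ^ (-(γ-1)) * (1 - Real.exp (-(l * rr (k+3))))
      ≤ (Real.log l + (1 - Real.exp (γ-2))⁻¹) * l ^ (γ-1) := by
  have hb : 0 < γ - 1 := by linarith
  have hb1 : γ - 1 < 1 := by linarith
  have hl0 : 0 < l := lt_of_lt_of_le (Real.exp_pos _) hl
  have hlog : uu 3 ≤ Real.log l := (Real.le_log_iff_exp_le hl0).2 hl
  obtain ⟨n, hn3, hnl, hnu⟩ := exists_n hlog
  have hsum := psi_summable (γ-1) l hb hb1 hl0.le
  rw [← hsum.sum_add_tsum_nat_add (n-2)]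
  have hlb_pos : (0:ℝ) ≤ l ^ (γ-1) := (Real.rpow_pos_of_pos hl0 _).le
  have hlpow : Real.exp ((γ-1) * Real.log l) = l ^ (γ-1) := by
    rw [Real.rpow_def_of_pos hl0, mul_comm]
  -- head
  have head : ∑ k ∈ Finset.range (n-2), rr (k+3) ^ (-(γ-1)) * (1 - Real.exp (-(l * rr (k+3))))
      ≤ Real.log l * l ^ (γ-1) := by
    have hterm : ∀ k ∈ Finset.range (n-2),
        rr (k+3) ^ (-(γ-1)) * (1 - Real.exp (-(l * rr (k+3)))) ≤ l ^ (γ-1) := by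
      intro k hk
      simp only [Finset.mem_range] at hk
      refine le_trans (psi_term_le_exp (γ-1) l k) ?_
      rw [← hlpow]
      apply Real.exp_le_exp.2
      have h1 : uu (k+3) ≤ uu n := uu_mono (by omega)
      nlinarith [hnl]
    calc ∑ k ∈ Finset.range (n-2), rr (k+3) ^ (-(γ-1)) * (1 - Real.exp (-(l * rr (k+3))))
        ≤ ∑ _k ∈ Finset.range (n-2), l ^ (γ-1) := Finset.sum_le_sum hterm
      _ = ((n-2:ℕ):ℝ) * l ^ (γ-1) := by rw [Finset.sum_const, Finset.card_range, nsmul_eq_mul]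
      _ ≤ Real.log l * l ^ (γ-1) := by
          apply mul_le_mul_of_nonneg_right _ hlb_pos
          calc ((n-2:ℕ):ℝ) ≤ (n:ℝ) := by exact_mod_cast Nat.sub_le n 2
            _ ≤ uu n := uu_ge_self hn3
            _ ≤ Real.log l := hnl
    -- tail
  have tail : ∑' k : ℕ, rr ((k+(n-2))+3) ^ (-(γ-1)) * (1 - Real.exp (-(l * rr ((k+(n-2))+3))))
      ≤ (1 - Real.exp (γ-2))⁻¹ * l ^ (γ-1) := by
    have hq1 : Real.exp (γ-2) < 1 := by rw [Real.exp_lt_one_iff]; linarith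
    have hq0 : (0:ℝ) ≤ Real.exp (γ-2) := Real.exp_nonneg _
    have hgeom : Summable (fun k : ℕ =>
        (l * Real.exp (-((2-γ) * uu (n+1)))) * Real.exp (γ-2) ^ k) :=
      (summable_geometric_of_lt_one hq0 hq1).mul_left _
    have hterm : ∀ k : ℕ,
        rr ((k+(n-2))+3) ^ (-(γ-1)) * (1 - Real.exp (-(l * rr ((k+(n-2))+3))))
          ≤ (l * Real.exp (-((2-γ) * uu (n+1)))) * Real.exp (γ-2) ^ k := by
      intro k
      refine le_trans (psi_term_le_lin (γ-1) l hl0.le (k+(n-2))) ?_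
      rw [mul_assoc, ← Real.exp_nat_mul, ← Real.exp_add]
      apply mul_le_mul_of_nonneg_left _ hl0.le
      apply Real.exp_le_exp.2
      have hidx : (k+(n-2))+3 = (n+1)+k := by omega
      rw [hidx]
      have h1 : uu (n+1) + k ≤ uu ((n+1)+k) := uu_add_ge_one (by omega) k
      have h2 : (1 - (γ-1)) = 2 - γ := by ring
      rw [h2]
      nlinarith [h1, Nat.cast_nonneg (α := ℝ) k]
    have hls : Summable (fun k : ℕ =>
        rr ((k+(n-2))+3) ^ (-(γ-1)) * (1 - Real.exp (-(l * rr ((k+(n-2))+3))))) := by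
      have := (summable_nat_add_iff (f := fun k : ℕ =>
        rr (k+3) ^ (-(γ-1)) * (1 - Real.exp (-(l * rr (k+3))))) (n-2)).2 hsum
      exact this
    calc ∑' k : ℕ, rr ((k+(n-2))+3) ^ (-(γ-1)) * (1 - Real.exp (-(l * rr ((k+(n-2))+3))))
        ≤ ∑' k : ℕ, (l * Real.exp (-((2-γ) * uu (n+1)))) * Real.exp (γ-2) ^ k :=
          hls.tsum_le_tsum hterm hgeom
      _ = (l * Real.exp (-((2-γ) * uu (n+1)))) * (1 - Real.exp (γ-2))⁻¹ := by
          rw [tsum_mul_left, tsum_geometric_of_lt_one hq0 hq1]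
      _ ≤ (1 - Real.exp (γ-2))⁻¹ * l ^ (γ-1) := by
          have hstep : l * Real.exp (-((2-γ) * uu (n+1))) ≤ l ^ (γ-1) := by
            have h1 : Real.exp (-((2-γ) * uu (n+1))) ≤ Real.exp (-((2-γ) * Real.log l)) := by
              apply Real.exp_le_exp.2
              have := hnu.le
              nlinarith [hnu.le]
            have h2 : Real.exp (-((2-γ) * Real.log l)) = l ^ (-(2-γ)) := by
              rw [Real.rpow_def_of_pos hl0, mul_comm]; ring_nf
            calc l * Real.exp (-((2-γ) * uu (n+1)))
                ≤ l * l ^ (-(2-γ)) := mul_le_mul_of_nonneg_left (h1.trans_eq h2) hl0.le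
              _ = l ^ (1:ℝ) * l ^ (-(2-γ)) := by rw [Real.rpow_one]
              _ = l ^ (γ-1) := by rw [← Real.rpow_add hl0]; ring_nf
          have hKpos : (0:ℝ) ≤ (1 - Real.exp (γ-2))⁻¹ := by
            apply inv_nonneg.2; linarith
          calc l * Real.exp (-((2-γ) * uu (n+1))) * (1 - Real.exp (γ-2))⁻¹
              ≤ l ^ (γ-1) * (1 - Real.exp (γ-2))⁻¹ := mul_le_mul_of_nonneg_right hstep hKpos
            _ = (1 - Real.exp (γ-2))⁻¹ * l ^ (γ-1) := by ring
  calc (∑ k ∈ Finset.range (n-2), rr (k+3) ^ (-(γ-1)) * (1 - Real.exp (-(l * rr (k+3)))))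
        + ∑' k : ℕ, rr ((k+(n-2))+3) ^ (-(γ-1)) * (1 - Real.exp (-(l * rr ((k+(n-2))+3))))
      ≤ Real.log l * l ^ (γ-1) + (1 - Real.exp (γ-2))⁻¹ * l ^ (γ-1) := add_le_add head tail
    _ = (Real.log l + (1 - Real.exp (γ-2))⁻¹) * l ^ (γ-1) := by ring

lemma part3 (γ : ℝ) (hγ1 : 1 < γ) (hγ2 : γ < 2) (c : ℝ) (hc : γ - 1 < c) :
    Filter.Tendsto (fun l : ℝ =>
      (∑' k : ℕ, rr (k+3) ^ (-(γ-1)) * (1 - Real.exp (-(l * rr (k+3))))) * l ^ (-c))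
      atTop (nhds 0) := by
  have hd : 0 < c - (γ-1) := by linarith
  set K := (1 - Real.exp (γ-2))⁻¹ with hK_def
  have hU : Filter.Tendsto (fun l : ℝ => (Real.log l + K) * l ^ ((γ-1) - c))
      atTop (nhds 0) := by
    have hT1 : Filter.Tendsto (fun l : ℝ => Real.log l * l ^ ((γ-1) - c)) atTop (nhds 0) := by
      have h0 := (isLittleO_log_rpow_atTop hd).tendsto_div_nhds_zero
      apply h0.congr'
      filter_upwards [eventually_gt_atTop (0:ℝ)] with l hl
      rw [div_eq_mul_inv, ← Real.rpow_neg hl.le]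
      ring_nf
    have hT2 : Filter.Tendsto (fun l : ℝ => K * l ^ ((γ-1) - c)) atTop (nhds 0) := by
      have h0 := tendsto_rpow_neg_atTop hd
      have h1 := h0.const_mul K
      rw [mul_zero] at h1
      apply h1.congr
      intro l
      congr 2
      ring
    have := hT1.add hT2
    rw [add_zero] at this
    apply this.congr
    intro l; ring
  refine tendsto_of_tendsto_of_tendsto_of_le_of_le' tendsto_const_nhds hU ?_ ?_
  · filter_upwards [eventually_ge_atTop (Real.exp (uu 3))] with l hl
    have hl0 : 0 < l := lt_of_lt_of_le (Real.exp_pos _) hl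
    apply mul_nonneg (tsum_nonneg (psi_term_nonneg (γ-1) l hl0.le))
    positivity
  · filter_upwards [eventually_ge_atTop (Real.exp (uu 3))] with l hl
    have hl0 : 0 < l := lt_of_lt_of_le (Real.exp_pos _) hl
    have h1 := psi_upper γ hγ1 hγ2 hl
    have h2 : (0:ℝ) ≤ l ^ (-c) := (Real.rpow_pos_of_pos hl0 _).le
    calc (∑' k : ℕ, rr (k+3) ^ (-(γ-1)) * (1 - Real.exp (-(l * rr (k+3))))) * l ^ (-c)
        ≤ ((Real.log l + K) * l ^ (γ-1)) * l ^ (-c) := mul_le_mul_of_nonneg_right h1 h2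
      _ = (Real.log l + K) * l ^ ((γ-1) - c) := by
          rw [mul_assoc, ← Real.rpow_add hl0]
          ring_nf

lemma g_atTop (γ : ℝ) (hγ1 : 1 < γ) (hγ2 : γ < 2) (c : ℝ) (hc0 : 0 ≤ c) (hc1 : c < γ - 1) :
    Filter.Tendsto (fun n : ℕ => (1 - Real.exp (-1)) * Real.exp ((γ-1) * uu n - c * uu (n+1)))
      atTop atTop := by
  have hbc : 0 < (γ-1) - c := by linarith
  have harg : Filter.Tendsto (fun n : ℕ => (γ-1) * uu n - c * uu (n+1)) atTop atTop := by
    have base : Filter.Tendsto (fun n : ℕ => Real.log n - 2) atTop atTop := by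
      have h1 : Filter.Tendsto (fun n : ℕ => Real.log n) atTop atTop :=
        Real.tendsto_log_atTop.comp tendsto_natCast_atTop_atTop
      exact (tendsto_atTop_add_const_right _ (-2) h1).congr (fun n => by ring)
    apply tendsto_atTop_mono' atTop _ base
    filter_upwards [eventually_ge_atTop 3,
      tendsto_natCast_atTop_atTop.eventually_ge_atTop (2/((γ-1)-c))] with n hn3 hnbc
    have hle : uu (n+1) ≤ uu n + Real.log n + 2 := uu_succ_le (by omega)
    have hlog1 : (1:ℝ) ≤ Real.log n := log_ge_one hn3
    have hn2 : 2 ≤ ((γ-1)-c) * (n:ℝ) := by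
      rw [div_le_iff₀ hbc] at hnbc
      linarith
    have key : 2 * Real.log n ≤ (((γ-1)-c) * (n:ℝ)) * Real.log n :=
      mul_le_mul_of_nonneg_right hn2 (by linarith)
    have hca : c * uu (n+1) ≤ c * (uu n + Real.log n + 2) :=
      mul_le_mul_of_nonneg_left hle hc0
    have hcl : c * Real.log n ≤ 1 * Real.log n :=
      mul_le_mul_of_nonneg_right (by linarith) (by linarith)
    have huu : uu n = (n:ℝ) * Real.log n := rfl
    nlinarith [hca, hcl, key, hle]
  have hexp := Real.tendsto_exp_atTop.comp harg
  apply Filter.Tendsto.const_mul_atTop _ hexp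
  have : Real.exp (-1) < 1 := by rw [Real.exp_lt_one_iff]; norm_num
  linarith

lemma part4 (γ : ℝ) (hγ1 : 1 < γ) (hγ2 : γ < 2) (c : ℝ) (hc0 : 0 ≤ c) (hc1 : c < γ - 1) :
    Filter.Tendsto (fun l : ℝ =>
      (∑' k : ℕ, rr (k+3) ^ (-(γ-1)) * (1 - Real.exp (-(l * rr (k+3))))) * l ^ (-c))
      atTop atTop := by
  have hb : 0 < γ - 1 := by linarith
  have hb1 : γ - 1 < 1 := by linarith
  rw [Filter.tendsto_atTop]
  intro M
  have hg := g_atTop γ hγ1 hγ2 c hc0 hc1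
  obtain ⟨N0, hN0⟩ := Filter.eventually_atTop.1 (hg.eventually_ge_atTop M)
  set N := max N0 3 with hN_def
  filter_upwards [eventually_ge_atTop (Real.exp (uu N))] with l hl
  have hl3 : Real.exp (uu 3) ≤ l :=
    le_trans (Real.exp_le_exp.2 (uu_mono (le_max_right N0 3))) hl
  have hl0 : 0 < l := lt_of_lt_of_le (Real.exp_pos _) hl3
  have hlog : uu 3 ≤ Real.log l := (Real.le_log_iff_exp_le hl0).2 hl3
  have hlogN : uu N ≤ Real.log l := (Real.le_log_iff_exp_le hl0).2 hl
  obtain ⟨n, hn3, hnl, hnu⟩ := exists_n hlog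
  have hnN : N ≤ n := by
    by_contra h
    push_neg at h
    have : uu (n+1) ≤ uu N := uu_mono (by omega)
    linarith
  have hsum := psi_summable (γ-1) l hb hb1 hl0.le
  have hterm := hsum.le_tsum (n-3) (fun k _ => psi_term_nonneg (γ-1) l hl0.le k)
  have hidx : (n-3)+3 = n := by omega
  rw [hidx] at hterm
  have htermpos : 0 ≤ rr n ^ (-(γ-1)) * (1 - Real.exp (-(l * rr n))) :=
    hidx ▸ psi_term_nonneg (γ-1) l hl0.le (n-3)
  have hterm2 : Real.exp ((γ-1) * uu n) * (1 - Real.exp (-1))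
      ≤ rr n ^ (-(γ-1)) * (1 - Real.exp (-(l * rr n))) := by
    rw [rr_rpow]
    have hA : -(-(γ-1) * uu n) = (γ-1) * uu n := by ring
    rw [hA]
    apply mul_le_mul_of_nonneg_left _ (Real.exp_nonneg _)
    have h1 : 1 ≤ l * rr n := by
      have hexp : Real.exp (uu n) ≤ l := (Real.le_log_iff_exp_le hl0).1 hnl
      calc (1:ℝ) = Real.exp (uu n) * Real.exp (-uu n) := by rw [← Real.exp_add]; simp
        _ ≤ l * rr n := mul_le_mul_of_nonneg_right hexp (Real.exp_nonneg _)
    have h2 : Real.exp (-(l * rr n)) ≤ Real.exp (-1) := Real.exp_le_exp.2 (by linarith)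
    linarith
  have hpow : Real.exp (-(c * uu (n+1))) ≤ l ^ (-c) := by
    have hlle : l ≤ Real.exp (uu (n+1)) := (Real.log_le_iff_le_exp hl0).1 hnu.le
    have h1 : l ^ c ≤ Real.exp (uu (n+1)) ^ c := Real.rpow_le_rpow hl0.le hlle hc0
    have h2 : Real.exp (uu (n+1)) ^ c = Real.exp (c * uu (n+1)) := by
      rw [← Real.exp_mul]; ring_nf
    rw [Real.rpow_neg hl0.le,
      show Real.exp (-(c * uu (n+1))) = (Real.exp (c * uu (n+1)))⁻¹ from by
        rw [← Real.exp_neg]]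
    exact inv_anti₀ (Real.rpow_pos_of_pos hl0 c) (h2 ▸ h1)
  calc M ≤ (1 - Real.exp (-1)) * Real.exp ((γ-1) * uu n - c * uu (n+1)) :=
        hN0 n (le_trans (le_max_left N0 3) hnN)
    _ = (Real.exp ((γ-1) * uu n) * (1 - Real.exp (-1))) * Real.exp (-(c * uu (n+1))) := by
        rw [show (γ-1) * uu n - c * uu (n+1) = (γ-1) * uu n + -(c * uu (n+1)) from by ring,
          Real.exp_add]
        ring
    _ ≤ (rr n ^ (-(γ-1)) * (1 - Real.exp (-(l * rr n)))) * l ^ (-c) := by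
        apply mul_le_mul hterm2 hpow (Real.exp_nonneg _) htermpos
    _ ≤ (∑' k : ℕ, rr (k+3) ^ (-(γ-1)) * (1 - Real.exp (-(l * rr (k+3))))) * l ^ (-c) :=
        mul_le_mul_of_nonneg_right hterm (Real.rpow_pos_of_pos hl0 _).le

/-- With rₙ = e^{-n log n}, Rₙ = Σ_{m≥n} r_m^{2-γ} ~ rₙ^{2-γ} and
Sₙ = Σ_{3≤m≤n} r_m^{-(γ-1)} ~ rₙ^{-(γ-1)}; consequently for
ψ'(λ) = Σ_{n≥3} rₙ^{-(γ-1)}(1 - e^{-λrₙ}) one has η_{ψ'} ≤ γ-1 and in fact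
γ_{ψ'} = η_{ψ'} = γ - 1. -/
theorem asymptotics_R_S (γ : ℝ) (hγ1 : 1 < γ) (hγ2 : γ < 2) :
    let r : ℕ → ℝ := fun n => Real.exp (-((n : ℝ) * Real.log n))
    let R : ℕ → ℝ := fun n => ∑' m : ℕ, r (n + m) ^ (2 - γ)
    let S : ℕ → ℝ := fun n => ∑ m ∈ Finset.Icc 3 n, r m ^ (-(γ - 1))
    let ψ' : ℝ → ℝ := fun l =>
      ∑' n : ℕ, r (n + 3) ^ (-(γ - 1)) * (1 - Real.exp (-(l * r (n + 3))))
    Tendsto (fun n : ℕ => R n / r n ^ (2 - γ)) atTop (nhds 1) ∧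
    Tendsto (fun n : ℕ => S n / r n ^ (-(γ - 1))) atTop (nhds 1) ∧
    (∀ c : ℝ, γ - 1 < c →
      Tendsto (fun l : ℝ => ψ' l * l ^ (-c)) atTop (nhds 0)) ∧
    (∀ c : ℝ, 0 ≤ c → c < γ - 1 →
      Tendsto (fun l : ℝ => ψ' l * l ^ (-c)) atTop atTop) := by
  intro r R S ψ'
  refine ⟨part1 γ hγ1 hγ2, part2 γ hγ1 hγ2,
    fun c hc => part3 γ hγ1 hγ2 c hc,
    fun c hc0 hc1 => part4 γ hγ1 hγ2 c hc0 hc1⟩
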